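/- Let 1 < p < ∞, let X ⊆ ℓ_p be a closed linear subspace with dim X = ∞, and let 0 < δ < 1. Then there exist a sequence of indices 0 = n_0 < n_1 < n_2 < … and elements u_k ∈ X (k ≥ 1) with u_k(j) = 0 for all j ≤ n_{k−1}, such that, setting v_k := P_{n_k}(u_k), w_k := R_{n_k}(u_k), I_k := {n_{k−1}+1, …, n_k} and b_k := min{|v_k(j)| : j ∈ I_k, v_k(j) ≠ 0}, the following hold for all k ≥ 1: (1) ‖u_k‖_p = 1; (2) 2n_{k−1} < n_k; (3) supp v_k ⊆ I_k; (4) |v_{k+1}(j)| ≤ min{b_k, (n_k − n_{k−1})^{−1/p}} for all j; (5) (n_{k+1} − n_k)^{−1/p} ≤ b_k; (6) 1 − δ ≤ ‖v_k‖_p ≤ 1; (7) ‖w_k‖_p ≤ δ/2^k. -/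

import Mathlib

open scoped ENNReal

/-- The `ℓ_p` (quasi)norm of a sequence, `‖f‖_p = (∑ |f j|^p)^{1/p}`. -/
noncomputable def lpNorm (p : ℝ) (f : ℕ → ℝ) : ℝ :=
  (∑' j : ℕ, |f j| ^ p) ^ (1 / p)

/-- `P_m f` keeps the first `m` coordinates of `f` and sets the rest to zero. -/
def Pproj (m : ℕ) (f : ℕ → ℝ) : ℕ → ℝ := fun j => if j < m then f j else 0

/-- `R_m f` sets the first `m` coordinates of `f` to zero (the tail of `f`). -/
def Rproj (m : ℕ) (f : ℕ → ℝ) : ℕ → ℝ := fun j => if j < m then 0 else f j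

/-- `minNonzeroOn a s` is the minimum of `|a j|` over those `j ∈ s` with
`a j ≠ 0` (as an infimum of the corresponding set of reals). -/
noncomputable def minNonzeroOn (a : ℕ → ℝ) (s : Set ℕ) : ℝ :=
  sInf {r : ℝ | ∃ j ∈ s, a j ≠ 0 ∧ r = |a j|}

namespace MC

set_option maxHeartbeats 1000000

variable {p : ℝ}

theorem toReal_q (hp : 1 < p) : (ENNReal.ofReal p).toReal = p :=
  ENNReal.toReal_ofReal (by linarith)

theorem norm_eq_lpNorm (hp : 1 < p) [Fact (1 ≤ ENNReal.ofReal p)]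
    (f : lp (fun _ : ℕ => ℝ) (ENNReal.ofReal p)) : ‖f‖ = lpNorm p ⇑f := by
  rw [lp.norm_eq_tsum_rpow (by rw [toReal_q hp]; linarith) f, lpNorm, toReal_q hp]
  simp [Real.norm_eq_abs]

theorem summable_abs_rpow (hp : 1 < p)
    (f : lp (fun _ : ℕ => ℝ) (ENNReal.ofReal p)) : Summable fun j => |f j| ^ p := by
  have := (lp.memℓp f).summable (by rw [toReal_q hp]; linarith)
  simpa [toReal_q hp, Real.norm_eq_abs] using this


theorem rpow_rpow_inv (hp : 1 < p) {x : ℝ} (hx : 0 ≤ x) : (x ^ p) ^ (1/p) = x := by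
  rw [← Real.rpow_mul hx, one_div, mul_inv_cancel₀ (by positivity)]
  exact Real.rpow_one x

theorem rpow_inv_rpow' (hp : 1 < p) {x : ℝ} (hx : 0 ≤ x) : (x ^ (1/p)) ^ p = x := by
  rw [← Real.rpow_mul hx, one_div, inv_mul_cancel₀ (by positivity)]
  exact Real.rpow_one x

theorem lpNorm_nonneg (f : ℕ → ℝ) : 0 ≤ lpNorm p f := Real.rpow_nonneg (tsum_nonneg (fun j => Real.rpow_nonneg (abs_nonneg _) _)) _

theorem lpNorm_rpow (hp : 1 < p) (f : ℕ → ℝ) : lpNorm p f ^ p = ∑' j, |f j| ^ p :=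
  rpow_inv_rpow' hp (tsum_nonneg (fun j => Real.rpow_nonneg (abs_nonneg _) _))

theorem tsum_Pproj (hp : 1 < p) (f : ℕ → ℝ) (m : ℕ) :
    ∑' j, |Pproj m f j| ^ p = ∑ j ∈ Finset.range m, |f j| ^ p := by
  rw [tsum_eq_sum (s := Finset.range m)]
  · exact Finset.sum_congr rfl fun j hj => by
      simp [Pproj, Finset.mem_range.mp hj]
  · intro j hj
    simp only [Finset.mem_range, not_lt] at hj
    simp [Pproj, Nat.not_lt.mpr hj, Real.zero_rpow (by positivity : p ≠ 0)]

theorem tsum_Rproj (hp : 1 < p) (f : ℕ → ℝ) (hf : Summable fun j => |f j| ^ p) (m : ℕ) :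
    ∑' j, |Rproj m f j| ^ p = ∑' k, |f (k + m)| ^ p := by
  have hs : Summable fun j => |Rproj m f j| ^ p := by
    apply Summable.of_nonneg_of_le (fun j => by positivity) _ hf
    intro j
    rcases lt_or_ge j m with h | h
    · simp [Rproj, h, Real.zero_rpow (by positivity : p ≠ 0), Real.rpow_nonneg (abs_nonneg _)]
    · simp [Rproj, Nat.not_lt.mpr h]
  rw [← Summable.sum_add_tsum_nat_add (f := fun j => |Rproj m f j| ^ p) m hs]
  have h1 : ∑ j ∈ Finset.range m, |Rproj m f j| ^ p = 0 := by
    apply Finset.sum_eq_zero; intro j hj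
    simp [Rproj, Finset.mem_range.mp hj, Real.zero_rpow (by positivity : p ≠ 0)]
  have h2 : ∀ k, |Rproj m f (k + m)| ^ p = |f (k + m)| ^ p := by
    intro k; simp [Rproj, Nat.not_lt.mpr (Nat.le_add_left m k)]
  simp [h1, h2]

theorem sum_P_add_R (hp : 1 < p) (f : ℕ → ℝ) (hf : Summable fun j => |f j| ^ p) (m : ℕ) :
    lpNorm p (Pproj m f) ^ p + lpNorm p (Rproj m f) ^ p = lpNorm p f ^ p := by
  rw [lpNorm_rpow hp, lpNorm_rpow hp, lpNorm_rpow hp, tsum_Pproj hp, tsum_Rproj hp f hf]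
  exact Summable.sum_add_tsum_nat_add m hf


theorem summable_Rproj (hp : 1 < p) (f : ℕ → ℝ) (hf : Summable fun j => |f j| ^ p) (m : ℕ) :
    Summable fun j => |Rproj m f j| ^ p := by
  apply Summable.of_nonneg_of_le (fun j => by positivity) _ hf
  intro j
  rcases lt_or_ge j m with h | h
  · simp [Rproj, h, Real.zero_rpow (by positivity : p ≠ 0), Real.rpow_nonneg (abs_nonneg _)]
  · simp [Rproj, Nat.not_lt.mpr h]

theorem coeFn_sum [Fact (1 ≤ ENNReal.ofReal p)] {ι : Type*} (T : Finset ι)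
    (Y : ι → lp (fun _ : ℕ => ℝ) (ENNReal.ofReal p)) (j : ℕ) :
    (⇑(∑ k ∈ T, Y k) : ℕ → ℝ) j = ∑ k ∈ T, (⇑(Y k) : ℕ → ℝ) j := by
  classical
  induction T using Finset.cons_induction with
  | empty => simp
  | cons a T ha ih =>
    rw [Finset.sum_cons, Finset.sum_cons, lp.coeFn_add, Pi.add_apply, ih]

theorem Lp_sum_le (hp : 1 < p) (s : Finset ℕ) {ι : Type*} (T : Finset ι) (F : ι → ℕ → ℝ) :
    (∑ j ∈ s, |∑ l ∈ T, F l j| ^ p) ^ (1/p) ≤ ∑ l ∈ T, (∑ j ∈ s, |F l j| ^ p) ^ (1/p) := by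
  classical
  induction T using Finset.cons_induction with
  | empty =>
    simp only [Finset.sum_empty, abs_zero, Real.zero_rpow (by positivity : p ≠ 0),
      Finset.sum_const_zero, Real.zero_rpow (by positivity : (1:ℝ)/p ≠ 0), le_refl]
  | cons a T ha ih =>
    simp only [Finset.sum_cons]
    calc (∑ j ∈ s, |F a j + ∑ l ∈ T, F l j| ^ p) ^ (1/p)
        ≤ (∑ j ∈ s, |F a j| ^ p) ^ (1/p) + (∑ j ∈ s, |∑ l ∈ T, F l j| ^ p) ^ (1/p) :=
          Real.Lp_add_le s _ _ hp.le
      _ ≤ _ := by exact add_le_add_right ih _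


/-- coordinate bound -/
theorem abs_apply_le_lpNorm (hp : 1 < p) (f : ℕ → ℝ) (hf : Summable fun j => |f j| ^ p)
    (j : ℕ) : |f j| ≤ lpNorm p f := by
  have h1 : |f j| ^ p ≤ ∑' i, |f i| ^ p := Summable.le_tsum hf j (fun i _ => by positivity)
  have h2 := Real.rpow_le_rpow (by positivity) h1 (by positivity : (0:ℝ) ≤ 1/p)
  rwa [← Real.rpow_mul (abs_nonneg _), mul_one_div, div_self (by positivity : p ≠ 0),
    Real.rpow_one] at h2

/-- small tails -/
theorem exists_tail_small (hp : 1 < p) (f : ℕ → ℝ) (hf : Summable fun j => |f j| ^ p)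
    {η : ℝ} (hη : 0 < η) (N : ℕ) : ∃ n, N < n ∧ lpNorm p (Rproj n f) ≤ η := by
  have htend : Filter.Tendsto (fun n => ∑' k, |f (k + n)| ^ p) Filter.atTop (nhds 0) :=
    tendsto_sum_nat_add (fun j => |f j| ^ p)
  have hev : ∀ᶠ n in Filter.atTop, ∑' k, |f (k + n)| ^ p < η ^ p := by
    have : (0:ℝ) < η ^ p := Real.rpow_pos_of_pos hη p
    exact htend.eventually_lt_const this
  obtain ⟨n, hn1, hn2⟩ := (hev.and (Filter.eventually_gt_atTop N)).exists
  refine ⟨n, hn2, ?_⟩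
  rw [lpNorm, tsum_Rproj hp f hf n]
  calc ((∑' k, |f (k + n)| ^ p) ^ (1/p)) ≤ (η ^ p) ^ (1/p) :=
        Real.rpow_le_rpow (tsum_nonneg fun k => by positivity) hn1.le (by positivity)
    _ = η := by
        rw [← Real.rpow_mul hη.le, mul_one_div, div_self (by positivity : p ≠ 0), Real.rpow_one]

/-- nonzero element vanishing on first m coordinates -/
theorem exists_norm_one_vanishing (hp : 1 < p) [Fact (1 ≤ ENNReal.ofReal p)]
    (X : Submodule ℝ (lp (fun _ : ℕ => ℝ) (ENNReal.ofReal p)))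
    (hXinf : ¬ FiniteDimensional ℝ X) (m : ℕ) :
    ∃ u : lp (fun _ : ℕ => ℝ) (ENNReal.ofReal p),
      u ∈ X ∧ ‖u‖ = 1 ∧ ∀ j < m, (⇑u : ℕ → ℝ) j = 0 := by
  set φ : X →ₗ[ℝ] (Fin m → ℝ) :=
    { toFun := fun x => fun i => (⇑(x : lp (fun _ : ℕ => ℝ) (ENNReal.ofReal p)) : ℕ → ℝ) i
      map_add' := by intro x y; ext i; simp [lp.coeFn_add]
      map_smul' := by intro c x; ext i; simp [lp.coeFn_smul] } with hφ
  have hker : LinearMap.ker φ ≠ ⊥ := by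
    intro hbot
    have hinj : Function.Injective φ := LinearMap.ker_eq_bot.mp hbot
    exact hXinf (FiniteDimensional.of_injective φ hinj)
  obtain ⟨x, hxker, hx0⟩ := Submodule.exists_mem_ne_zero_of_ne_bot hker
  have hx0' : (x : lp (fun _ : ℕ => ℝ) (ENNReal.ofReal p)) ≠ 0 := by
    simpa [Submodule.coe_eq_zero] using hx0
  have hnx : (0:ℝ) < ‖(x : lp (fun _ : ℕ => ℝ) (ENNReal.ofReal p))‖ := norm_pos_iff.mpr hx0'
  refine ⟨‖(x : lp (fun _ : ℕ => ℝ) (ENNReal.ofReal p))‖⁻¹ • (x : lp _ _), X.smul_mem _ x.2, ?_, ?_⟩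
  · rw [norm_smul, norm_inv, norm_norm, inv_mul_cancel₀ hnx.ne']
  · intro j hj
    have : φ x = 0 := hxker
    have hj0 : (⇑(x : lp (fun _ : ℕ => ℝ) (ENNReal.ofReal p)) : ℕ → ℝ) j = 0 := by
      have := congrFun this ⟨j, hj⟩
      simpa [hφ] using this
    rw [lp.coeFn_smul]
    simp [hj0]

theorem exists_flat (hp : 1 < p) [Fact (1 ≤ ENNReal.ofReal p)]
    (X : Submodule ℝ (lp (fun _ : ℕ => ℝ) (ENNReal.ofReal p)))
    (hXinf : ¬ FiniteDimensional ℝ X) (m : ℕ) {ε : ℝ} (hε : 0 < ε) :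
    ∃ u : lp (fun _ : ℕ => ℝ) (ENNReal.ofReal p),
      u ∈ X ∧ ‖u‖ = 1 ∧ (∀ j < m, (⇑u : ℕ → ℝ) j = 0) ∧ ∀ j, |(⇑u : ℕ → ℝ) j| ≤ ε := by
  classical
  have hp0 : (0:ℝ) < p := by linarith
  -- choose N
  set N : ℕ := max 1 ⌈(3/ε)^p⌉₊ with hNdef
  have hN1 : 1 ≤ N := le_max_left _ _
  have hN0 : (0:ℝ) < N := by exact_mod_cast Nat.lt_of_lt_of_le Nat.zero_lt_one hN1
  have h0 : (3/ε)^p ≤ (N:ℝ) := le_trans (Nat.le_ceil _) (by exact_mod_cast Nat.cast_le.mpr (le_max_right _ _))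
  have h1 : 3/ε ≤ (N:ℝ)^(1/p) := by
    calc 3/ε = ((3/ε)^p)^(1/p) := (rpow_rpow_inv hp (by positivity)).symm
    _ ≤ (N:ℝ)^(1/p) := Real.rpow_le_rpow (by positivity) h0 (by positivity)
  have hNp : (0:ℝ) < (N:ℝ)^(1/p) := Real.rpow_pos_of_pos hN0 _
  have hNeps : 3 / (N:ℝ)^(1/p) ≤ ε := by
    rw [div_le_iff₀ hNp]
    rw [div_le_iff₀ hε] at h1
    nlinarith
  -- choose η
  set η : ℝ := (2*((N:ℝ)+1))⁻¹ with hηdef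
  have hη : 0 < η := by positivity
  have hN1' : (1:ℝ) ≤ N := by exact_mod_cast hN1
  have hη4 : η ≤ 1/4 := by
    rw [hηdef]
    rw [inv_le_comm₀ (by positivity) (by norm_num)]
    norm_num
    linarith [hN1']
  have hNη : (N:ℝ) * η ≤ 1/2 := by
    rw [hηdef, inv_eq_one_div, mul_one_div, div_le_iff₀ (by positivity)]
    linarith
  have hNη1 : ((N:ℝ)+1) * η = 1/2 := by
    rw [hηdef]
    field_simp
  -- the gliding hump sequence
  have key : ∀ a : ℕ, ∃ (y : lp (fun _ : ℕ => ℝ) (ENNReal.ofReal p)) (n : ℕ),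
      y ∈ X ∧ ‖y‖ = 1 ∧ (∀ j < a, (⇑y : ℕ → ℝ) j = 0) ∧ a < n ∧
      lpNorm p (Rproj n ⇑y) ≤ η := by
    intro a
    obtain ⟨y, hyX, hy1, hy0⟩ := exists_norm_one_vanishing hp X hXinf a
    obtain ⟨n, hn1, hn2⟩ := exists_tail_small hp ⇑y (summable_abs_rpow hp y) hη a
    exact ⟨y, n, hyX, hy1, hy0, hn1, hn2⟩
  choose Yf Bf hmem hnorm hzero hltB htail using key
  set ms : ℕ → ℕ := fun k => Nat.rec m (fun _ prev => Bf prev) k with hmsdef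
  have msS : ∀ k, ms (k+1) = Bf (ms k) := fun k => rfl
  have ms0 : ms 0 = m := rfl
  set Y : ℕ → lp (fun _ : ℕ => ℝ) (ENNReal.ofReal p) := fun k => Yf (ms k) with hYdef
  have hYmem : ∀ k, Y k ∈ X := fun k => hmem (ms k)
  have hYnorm : ∀ k, ‖Y k‖ = 1 := fun k => hnorm (ms k)
  have hYzero : ∀ k, ∀ j < ms k, (⇑(Y k) : ℕ → ℝ) j = 0 := fun k => hzero (ms k)
  have hms : ∀ k, ms k < ms (k+1) := fun k => (msS k) ▸ hltB (ms k)
  have hYtail : ∀ k, lpNorm p (Rproj (ms (k+1)) ⇑(Y k)) ≤ η := fun k => (msS k) ▸ htail (ms k)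
  have hmono : StrictMono ms := strictMono_nat_of_lt_succ hms
  have hsumY : ∀ k, Summable fun j => |(⇑(Y k) : ℕ → ℝ) j| ^ p := fun k => summable_abs_rpow hp (Y k)
  -- the sum S
  set S : lp (fun _ : ℕ => ℝ) (ENNReal.ofReal p) := ∑ k ∈ Finset.range N, Y k with hSdef
  have hSX : S ∈ X := Submodule.sum_mem X fun k _ => hYmem k
  have hScoe : ∀ j, (⇑S : ℕ → ℝ) j = ∑ k ∈ Finset.range N, (⇑(Y k) : ℕ → ℝ) j :=
    fun j => coeFn_sum _ _ j
  -- block norms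
  set bn : Finset ℕ → (ℕ → ℝ) → ℝ := fun s f => (∑ j ∈ s, |f j| ^ p) ^ (1/p) with hbndef
  have bn_nonneg : ∀ s f, 0 ≤ bn s f := fun s f =>
    Real.rpow_nonneg (Finset.sum_nonneg fun j _ => by positivity) _
  set B2 : ℕ → Finset ℕ := fun k => Finset.Ico (ms k) (ms (k+1)) with hB2def
  -- Y l vanishes on later blocks
  have hb1 : ∀ k l, k < l → bn (B2 k) ⇑(Y l) = 0 := by
    intro k l hkl
    have : ∀ j ∈ B2 k, |(⇑(Y l) : ℕ → ℝ) j| ^ p = 0 := by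
      intro j hj
      have hj2 : j < ms l := lt_of_lt_of_le (Finset.mem_Ico.mp hj).2 (hmono.monotone hkl)
      rw [hYzero l j hj2]
      simp [Real.zero_rpow (by positivity : p ≠ 0)]
    rw [hbndef]
    simp only [Finset.sum_congr rfl this, Finset.sum_const_zero]
    exact Real.zero_rpow (by positivity : (1:ℝ)/p ≠ 0)
  -- Y l small on earlier blocks
  have hb2 : ∀ k l, l < k → bn (B2 k) ⇑(Y l) ≤ η := by
    intro k l hlk
    have hcoeq : ∀ j ∈ B2 k, |(⇑(Y l) : ℕ → ℝ) j| ^ p = |Rproj (ms (l+1)) (⇑(Y l)) j| ^ p := by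
      intro j hj
      have : ms (l+1) ≤ j := le_trans (hmono.monotone hlk) (Finset.mem_Ico.mp hj).1
      rw [Rproj]
      simp [Nat.not_lt.mpr this]
    have hsum : ∑ j ∈ B2 k, |(⇑(Y l) : ℕ → ℝ) j| ^ p
        ≤ ∑' j, |Rproj (ms (l+1)) (⇑(Y l)) j| ^ p := by
      rw [Finset.sum_congr rfl hcoeq]
      exact Summable.sum_le_tsum (B2 k) (fun j _ => by positivity)
        (summable_Rproj hp _ (hsumY l) _)
    calc bn (B2 k) ⇑(Y l) ≤ (∑' j, |Rproj (ms (l+1)) (⇑(Y l)) j| ^ p) ^ (1/p) :=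
          Real.rpow_le_rpow (Finset.sum_nonneg fun j _ => by positivity) hsum (by positivity)
      _ = lpNorm p (Rproj (ms (l+1)) ⇑(Y l)) := rfl
      _ ≤ η := hYtail l
  -- Y k big on its own block
  have hb3 : ∀ k, 1 - η ≤ bn (B2 k) ⇑(Y k) := by
    intro k
    have hsum_eq : ∑ j ∈ B2 k, |(⇑(Y k) : ℕ → ℝ) j| ^ p
        = ∑ j ∈ Finset.range (ms (k+1)), |(⇑(Y k) : ℕ → ℝ) j| ^ p := by
      apply Finset.sum_subset
      · intro j hj
        exact Finset.mem_range.mpr (Finset.mem_Ico.mp hj).2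
      · intro j hj hj2
        have : j < ms k := by
          rcases Nat.lt_or_ge j (ms k) with h | h
          · exact h
          · exact absurd (Finset.mem_Ico.mpr ⟨h, Finset.mem_range.mp hj⟩) hj2
        rw [hYzero k j this]
        simp [Real.zero_rpow (by positivity : p ≠ 0)]
    have hsplit := sum_P_add_R hp ⇑(Y k) (hsumY k) (ms (k+1))
    have hnorm1 : lpNorm p ⇑(Y k) = 1 := by rw [← norm_eq_lpNorm hp]; exact hYnorm k
    have hRle : lpNorm p (Rproj (ms (k+1)) ⇑(Y k)) ^ p ≤ η ^ p :=
      Real.rpow_le_rpow (lpNorm_nonneg _) (hYtail k) hp0.le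
    have hηp : η ^ p ≤ η := by
      calc η ^ p ≤ η ^ (1:ℝ) :=
            Real.rpow_le_rpow_of_exponent_ge hη (by linarith) hp.le
        _ = η := Real.rpow_one η
    have h1ηp : (1-η) ^ p ≤ 1 - η := by
      calc (1-η) ^ p ≤ (1-η) ^ (1:ℝ) :=
            Real.rpow_le_rpow_of_exponent_ge (by linarith) (by linarith) hp.le
        _ = 1 - η := Real.rpow_one _
    have hPge : (1-η)^p ≤ lpNorm p (Pproj (ms (k+1)) ⇑(Y k)) ^ p := by
      rw [hnorm1, Real.one_rpow] at hsplit
      linarith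
    have hPsum : lpNorm p (Pproj (ms (k+1)) ⇑(Y k)) ^ p
        = ∑ j ∈ B2 k, |(⇑(Y k) : ℕ → ℝ) j| ^ p := by
      rw [lpNorm_rpow hp, tsum_Pproj hp, hsum_eq]
    calc 1 - η = ((1-η)^p)^(1/p) := (rpow_rpow_inv hp (by linarith)).symm
      _ ≤ (∑ j ∈ B2 k, |(⇑(Y k) : ℕ → ℝ) j| ^ p) ^ (1/p) := by
          apply Real.rpow_le_rpow (Real.rpow_nonneg (by linarith) _) _ (by positivity)
          rw [← hPsum]; exact hPge
      _ = bn (B2 k) ⇑(Y k) := rfl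
  -- S is big on each block
  have hbnS : ∀ k, k < N → (1:ℝ)/2 ≤ bn (B2 k) ⇑S := by
    intro k hkN
    set d : ℕ → ℝ := fun j => ∑ l ∈ (Finset.range N).erase k, (⇑(Y l) : ℕ → ℝ) j with hddef
    have hSd : ∀ j, (⇑(Y k) : ℕ → ℝ) j = (⇑S : ℕ → ℝ) j + (- d j) := by
      intro j
      rw [hScoe j, ← Finset.add_sum_erase _ _ (Finset.mem_range.mpr hkN)]
      ring
    have htri : bn (B2 k) ⇑(Y k) ≤ bn (B2 k) ⇑S + bn (B2 k) (fun j => - d j) := by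
      rw [hbndef]
      simp only
      calc (∑ j ∈ B2 k, |(⇑(Y k) : ℕ → ℝ) j| ^ p) ^ (1/p)
          = (∑ j ∈ B2 k, |(⇑S : ℕ → ℝ) j + (- d j)| ^ p) ^ (1/p) := by
            congr 1; exact Finset.sum_congr rfl fun j _ => by rw [hSd j]
        _ ≤ _ := Real.Lp_add_le _ _ _ hp.le
    have hbnd : bn (B2 k) (fun j => - d j) ≤ (N:ℝ) * η := by
      have h1 : bn (B2 k) (fun j => - d j) = bn (B2 k) d := by
        rw [hbndef]; simp only [abs_neg]
      rw [h1, hbndef]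
      calc (∑ j ∈ B2 k, |d j| ^ p) ^ (1/p)
          ≤ ∑ l ∈ (Finset.range N).erase k, (∑ j ∈ B2 k, |(⇑(Y l) : ℕ → ℝ) j| ^ p) ^ (1/p) :=
            Lp_sum_le hp _ _ _
        _ ≤ ∑ l ∈ (Finset.range N).erase k, η := by
            apply Finset.sum_le_sum
            intro l hl
            rcases Nat.lt_or_ge l k with h | h
            · exact hb2 k l h
            · have hlk : k < l := lt_of_le_of_ne h (fun he => (Finset.mem_erase.mp hl).1 he.symm)
              rw [show (∑ j ∈ B2 k, |(⇑(Y l) : ℕ → ℝ) j| ^ p) ^ (1/p) = bn (B2 k) ⇑(Y l) from rfl,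
                hb1 k l hlk]
              exact hη.le
        _ ≤ (N:ℝ) * η := by
            rw [Finset.sum_const, nsmul_eq_mul]
            apply mul_le_mul_of_nonneg_right _ hη.le
            exact_mod_cast le_trans (Nat.cast_le.mpr (Finset.card_erase_le (a := k) (s := Finset.range N))) (by simp)
    have := hb3 k
    have hfin : 1 - η - (N:ℝ)*η ≤ bn (B2 k) ⇑S := by linarith
    calc (1:ℝ)/2 = 1 - ((N:ℝ)+1) * η := by linarith [hNη1]
      _ ≤ bn (B2 k) ⇑S := by nlinarith
  -- partition of the sum
  have hpart : ∀ K : ℕ, ∑ j ∈ Finset.Ico (ms 0) (ms K), |(⇑S : ℕ → ℝ) j| ^ p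
      = ∑ k ∈ Finset.range K, ∑ j ∈ B2 k, |(⇑S : ℕ → ℝ) j| ^ p := by
    intro K
    induction K with
    | zero => simp
    | succ K ih =>
      rw [← Finset.sum_Ico_consecutive _ (hmono.monotone (Nat.zero_le K))
        (hmono (Nat.lt_succ_self K)).le, ih, Finset.sum_range_succ]
  have hsumS := summable_abs_rpow hp S
  have hSnorm_eq : ‖S‖ = lpNorm p ⇑S := norm_eq_lpNorm hp S
  have hblock_ge : ∀ k < N, ((1:ℝ)/2) ^ p ≤ ∑ j ∈ B2 k, |(⇑S : ℕ → ℝ) j| ^ p := by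
    intro k hk
    have h := Real.rpow_le_rpow (by norm_num) (hbnS k hk) hp0.le
    rwa [rpow_inv_rpow' hp (Finset.sum_nonneg fun j _ => by positivity)] at h
  have hlowS : (N:ℝ) * ((1:ℝ)/2)^p ≤ lpNorm p ⇑S ^ p := by
    rw [lpNorm_rpow hp]
    calc (N:ℝ) * ((1:ℝ)/2)^p = ∑ _k ∈ Finset.range N, ((1:ℝ)/2)^p := by
          rw [Finset.sum_const, nsmul_eq_mul]; simp
      _ ≤ ∑ k ∈ Finset.range N, ∑ j ∈ B2 k, |(⇑S : ℕ → ℝ) j| ^ p :=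
          Finset.sum_le_sum (fun k hk => hblock_ge k (Finset.mem_range.mp hk))
      _ = ∑ j ∈ Finset.Ico (ms 0) (ms N), |(⇑S : ℕ → ℝ) j| ^ p := (hpart N).symm
      _ ≤ ∑' j, |(⇑S : ℕ → ℝ) j| ^ p := Summable.sum_le_tsum _ (fun j _ => by positivity) hsumS
  have hSge : (N:ℝ)^(1/p) / 2 ≤ ‖S‖ := by
    have h2 : ((N:ℝ) * ((1:ℝ)/2)^p) ^ (1/p) ≤ (lpNorm p ⇑S ^ p)^(1/p) :=
      Real.rpow_le_rpow (by positivity) hlowS (by positivity)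
    rw [rpow_rpow_inv hp (lpNorm_nonneg _)] at h2
    rw [hSnorm_eq]
    calc (N:ℝ)^(1/p)/2 = ((N:ℝ) * ((1:ℝ)/2)^p)^(1/p) := by
          rw [Real.mul_rpow (by positivity) (by positivity),
            rpow_rpow_inv hp (by norm_num)]
          ring
      _ ≤ lpNorm p ⇑S := h2
  have hSpos : (0:ℝ) < ‖S‖ := lt_of_lt_of_le (by positivity) hSge
  -- coordinate bound
  have hqne : (ENNReal.ofReal p) ≠ 0 := (ENNReal.ofReal_pos.mpr hp0).ne'
  have hcoord : ∀ j, |(⇑S : ℕ → ℝ) j| ≤ 3/2 := by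
    intro j
    rw [hScoe j]
    have A := (Finset.range N).filter (fun k => ms k ≤ j ∧ j < ms (k+1))
    have hcardA : ((Finset.range N).filter (fun k => ms k ≤ j ∧ j < ms (k+1))).card ≤ 1 := by
      apply Finset.card_le_one.mpr
      intro a ha b hb
      have ha' := (Finset.mem_filter.mp ha).2
      have hb' := (Finset.mem_filter.mp hb).2
      rcases lt_trichotomy a b with h | h | h
      · exact absurd (lt_of_lt_of_le ha'.2 (le_trans (hmono.monotone h) hb'.1)) (lt_irrefl j)
      · exact h
      · exact absurd (lt_of_lt_of_le hb'.2 (le_trans (hmono.monotone h) ha'.1)) (lt_irrefl j)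
    have hterm_in : ∀ k ∈ (Finset.range N).filter (fun k => ms k ≤ j ∧ j < ms (k+1)), |(⇑(Y k) : ℕ → ℝ) j| ≤ 1 := by
      intro k _
      have h := lp.norm_apply_le_norm hqne (Y k) j
      rw [hYnorm k] at h
      simpa [Real.norm_eq_abs] using h
    have hterm_out : ∀ k ∈ (Finset.range N).filter (fun k => ¬(ms k ≤ j ∧ j < ms (k+1))),
        |(⇑(Y k) : ℕ → ℝ) j| ≤ η := by
      intro k hk
      have hcond := (Finset.mem_filter.mp hk).2
      rcases Nat.lt_or_ge j (ms k) with h | h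
      · rw [hYzero k j h]; simpa using hη.le
      · have hj2 : ms (k+1) ≤ j := by
          rcases Nat.lt_or_ge j (ms (k+1)) with h2 | h2
          · exact absurd ⟨h, h2⟩ hcond
          · exact h2
        have heq : (⇑(Y k) : ℕ → ℝ) j = Rproj (ms (k+1)) (⇑(Y k)) j := by
          simp [Rproj, Nat.not_lt.mpr hj2]
        rw [heq]
        exact le_trans (abs_apply_le_lpNorm hp _ (summable_Rproj hp _ (hsumY k) _) j)
          (hYtail k)
    calc |∑ k ∈ Finset.range N, (⇑(Y k) : ℕ → ℝ) j|
        ≤ ∑ k ∈ Finset.range N, |(⇑(Y k) : ℕ → ℝ) j| := Finset.abs_sum_le_sum_abs _ _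
      _ = (∑ k ∈ (Finset.range N).filter (fun k => ms k ≤ j ∧ j < ms (k+1)), |(⇑(Y k) : ℕ → ℝ) j|)
          + ∑ k ∈ (Finset.range N).filter (fun k => ¬(ms k ≤ j ∧ j < ms (k+1))),
              |(⇑(Y k) : ℕ → ℝ) j| :=
          (Finset.sum_filter_add_sum_filter_not (Finset.range N)
            (fun k => ms k ≤ j ∧ j < ms (k+1)) _).symm
      _ ≤ ((Finset.range N).filter (fun k => ms k ≤ j ∧ j < ms (k+1))).card • (1:ℝ)
          + ((Finset.range N).filter (fun k => ¬(ms k ≤ j ∧ j < ms (k+1)))).card • η :=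
          add_le_add (Finset.sum_le_card_nsmul _ _ _ hterm_in)
            (Finset.sum_le_card_nsmul _ _ _ hterm_out)
      _ ≤ 1 + (N:ℝ) * η := by
          apply add_le_add
          · rw [nsmul_eq_mul, mul_one]
            exact_mod_cast hcardA
          · rw [nsmul_eq_mul]
            apply mul_le_mul_of_nonneg_right _ hη.le
            have := le_trans (Finset.card_filter_le (Finset.range N) (fun k => ¬(ms k ≤ j ∧ j < ms (k+1)))) (le_of_eq (Finset.card_range N))
            exact_mod_cast this
      _ ≤ 3/2 := by linarith [hNη]
  -- conclusion
  refine ⟨‖S‖⁻¹ • S, X.smul_mem _ hSX, ?_, ?_, ?_⟩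
  · rw [norm_smul, norm_inv, norm_norm, inv_mul_cancel₀ hSpos.ne']
  · intro j hj
    rw [lp.coeFn_smul, Pi.smul_apply, smul_eq_mul]
    have hz : (⇑S : ℕ → ℝ) j = 0 := by
      rw [hScoe j]
      apply Finset.sum_eq_zero
      intro k _
      refine hYzero k j (lt_of_lt_of_le hj ?_)
      rw [← ms0]
      exact hmono.monotone (Nat.zero_le k)
    rw [hz, mul_zero]
  · intro j
    rw [lp.coeFn_smul, Pi.smul_apply, smul_eq_mul, abs_mul, abs_inv, abs_norm]
    calc ‖S‖⁻¹ * |(⇑S : ℕ → ℝ) j| ≤ ‖S‖⁻¹ * (3/2) :=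
          mul_le_mul_of_nonneg_left (hcoord j) (by positivity)
      _ ≤ ((N:ℝ)^(1/p)/2)⁻¹ * (3/2) := by
          apply mul_le_mul_of_nonneg_right _ (by norm_num)
          exact inv_anti₀ (by positivity) hSge
      _ = 3 / (N:ℝ)^(1/p) := by
          rw [inv_div]
          ring
      _ ≤ ε := hNeps


theorem lpNorm_zero_of (hp : 1 < p) (f : ℕ → ℝ) (h : ∀ j, f j = 0) : lpNorm p f = 0 := by
  rw [lpNorm]
  have : ∀ j : ℕ, |f j| ^ p = 0 := fun j => by
    rw [h j, abs_zero, Real.zero_rpow (by positivity : p ≠ 0)]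
  rw [tsum_congr this, tsum_zero, Real.zero_rpow (by positivity : (1:ℝ)/p ≠ 0)]

theorem minNonzeroOn_spec (v : ℕ → ℝ) (a b : ℕ) (hne : ∃ j ∈ Set.Ico a b, v j ≠ 0) :
    0 < minNonzeroOn v (Set.Ico a b) ∧
    ∀ j ∈ Set.Ico a b, v j ≠ 0 → minNonzeroOn v (Set.Ico a b) ≤ |v j| := by
  have hsub : {r : ℝ | ∃ j ∈ Set.Ico a b, v j ≠ 0 ∧ r = |v j|}
      ⊆ (fun j => |v j|) '' (Set.Ico a b) := by
    rintro r ⟨j, hj, _, rfl⟩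
    exact ⟨j, hj, rfl⟩
  have hfin : {r : ℝ | ∃ j ∈ Set.Ico a b, v j ≠ 0 ∧ r = |v j|}.Finite :=
    Set.Finite.subset (Set.Finite.image _ (Set.finite_Ico a b)) hsub
  have hnonempty : {r : ℝ | ∃ j ∈ Set.Ico a b, v j ≠ 0 ∧ r = |v j|}.Nonempty := by
    obtain ⟨j, hj, hv⟩ := hne
    exact ⟨|v j|, j, hj, hv, rfl⟩
  have hmem := hnonempty.csInf_mem hfin
  constructor
  · obtain ⟨j, _, hv, he⟩ := hmem
    rw [minNonzeroOn, he]
    exact abs_pos.mpr hv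
  · intro j hj hv
    exact csInf_le hfin.bddBelow ⟨j, hj, hv, rfl⟩


end MC

/-- A stage of the construction. -/
structure MCStage (p : ℝ) [Fact (1 ≤ ENNReal.ofReal p)]
    (X : Submodule ℝ (lp (fun _ : ℕ => ℝ) (ENNReal.ofReal p))) (δ : ℝ) (i : ℕ) where
  n0 : ℕ
  n1 : ℕ
  u : lp (fun _ : ℕ => ℝ) (ENNReal.ofReal p)
  hmem : u ∈ X
  hz : ∀ j < n0, (⇑u : ℕ → ℝ) j = 0
  hnorm : ‖u‖ = 1
  hlt : 2 * n0 < n1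
  h6a : 1 - δ ≤ lpNorm p (Pproj n1 ⇑u)
  h6b : lpNorm p (Pproj n1 ⇑u) ≤ 1
  h7 : lpNorm p (Rproj n1 ⇑u) ≤ δ / 2 ^ (i+1)

namespace MC
variable {p : ℝ} [Fact (1 ≤ ENNReal.ofReal p)]
variable {X : Submodule ℝ (lp (fun _ : ℕ => ℝ) (ENNReal.ofReal p))} {δ : ℝ}

noncomputable def bS {i : ℕ} (s : MCStage p X δ i) : ℝ :=
  minNonzeroOn (Pproj s.n1 ⇑s.u) (Set.Ico s.n0 s.n1)

theorem stage_nonzero (hp : 1 < p) (hδ1 : δ < 1) {i : ℕ} (s : MCStage p X δ i) :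
    ∃ j ∈ Set.Ico s.n0 s.n1, Pproj s.n1 (⇑s.u) j ≠ 0 := by
  by_contra hcon
  push_neg at hcon
  have hall : ∀ j, Pproj s.n1 (⇑s.u) j = 0 := by
    intro j
    rcases Nat.lt_or_ge j s.n0 with h | h
    · simp [Pproj, s.hz j h]
    · rcases Nat.lt_or_ge j s.n1 with h2 | h2
      · exact hcon j ⟨h, h2⟩
      · simp [Pproj, Nat.not_lt.mpr h2]
  have := s.h6a
  rw [lpNorm_zero_of hp _ hall] at this
  linarith

theorem stage_b_pos (hp : 1 < p) (hδ1 : δ < 1) {i : ℕ} (s : MCStage p X δ i) :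
    0 < bS s :=
  (minNonzeroOn_spec _ _ _ (stage_nonzero hp hδ1 s)).1

theorem stage_n0_lt_n1 {i : ℕ} (s : MCStage p X δ i) : s.n0 < s.n1 :=
  lt_of_le_of_lt (Nat.le_mul_of_pos_left _ (by norm_num)) s.hlt

/-- The main step: given constraints, produce a stage. -/
theorem step_exists (hp : 1 < p)
    (hXinf : ¬ FiniteDimensional ℝ X) (hδ0 : 0 < δ) (hδ1 : δ < 1)
    (i : ℕ) (n : ℕ) {β : ℝ} (hβ : 0 < β) (γ : ℕ) :
    ∃ s : MCStage p X δ i, s.n0 = n ∧ (∀ j, |(⇑s.u : ℕ → ℝ) j| ≤ β) ∧ γ < s.n1 := by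
  have hp0 : (0:ℝ) < p := by linarith
  obtain ⟨u, huX, hu1, hu0, huflat⟩ := exists_flat hp X hXinf n hβ
  have hηpos : (0:ℝ) < δ / 2 ^ (i+1) := by positivity
  obtain ⟨n', hn'1, hn'2⟩ := exists_tail_small hp ⇑u (summable_abs_rpow hp u) hηpos
    (max (2*n) γ)
  have h2n : 2 * n < n' := lt_of_le_of_lt (le_max_left _ _) hn'1
  have hγ : γ < n' := lt_of_le_of_lt (le_max_right _ _) hn'1
  -- bounds on lpNorm of Pproj
  have hsplit := sum_P_add_R hp ⇑u (summable_abs_rpow hp u) n'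
  have hlpu : lpNorm p ⇑u = 1 := by rw [← norm_eq_lpNorm hp, hu1]
  rw [hlpu, Real.one_rpow] at hsplit
  have hδ2 : δ / 2 ^ (i+1) ≤ δ := by
    rw [div_le_iff₀ (by positivity)]
    have h2 : (1:ℝ) ≤ 2 ^ (i+1) := one_le_pow₀ (by norm_num)
    nlinarith
  have hRp : lpNorm p (Rproj n' ⇑u) ^ p ≤ δ ^ p :=
    Real.rpow_le_rpow (lpNorm_nonneg _) (le_trans hn'2 hδ2) hp0.le
  have hδp : δ ^ p ≤ δ := by
    calc δ ^ p ≤ δ ^ (1:ℝ) := Real.rpow_le_rpow_of_exponent_ge hδ0 hδ1.le hp.le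
      _ = δ := Real.rpow_one δ
  have h1δp : (1-δ) ^ p ≤ 1 - δ := by
    calc (1-δ) ^ p ≤ (1-δ) ^ (1:ℝ) :=
          Real.rpow_le_rpow_of_exponent_ge (by linarith) (by linarith) hp.le
      _ = 1 - δ := Real.rpow_one _
  have hPp_ge : (1-δ)^p ≤ lpNorm p (Pproj n' ⇑u) ^ p := by linarith
  have hPp_le : lpNorm p (Pproj n' ⇑u) ^ p ≤ 1 := by
    have hR0 : 0 ≤ lpNorm p (Rproj n' ⇑u) := lpNorm_nonneg _
    nlinarith [Real.rpow_nonneg hR0 p]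
  have h6a : 1 - δ ≤ lpNorm p (Pproj n' ⇑u) := by
    calc 1 - δ = ((1-δ)^p)^(1/p) := (rpow_rpow_inv hp (by linarith)).symm
      _ ≤ (lpNorm p (Pproj n' ⇑u) ^ p) ^ (1/p) :=
          Real.rpow_le_rpow (Real.rpow_nonneg (by linarith) _) hPp_ge (by positivity)
      _ = lpNorm p (Pproj n' ⇑u) := rpow_rpow_inv hp (lpNorm_nonneg _)
  have h6b : lpNorm p (Pproj n' ⇑u) ≤ 1 := by
    calc lpNorm p (Pproj n' ⇑u) = (lpNorm p (Pproj n' ⇑u) ^ p) ^ (1/p) :=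
          (rpow_rpow_inv hp (lpNorm_nonneg _)).symm
      _ ≤ (1:ℝ) ^ ((1:ℝ)/p) :=
          Real.rpow_le_rpow (Real.rpow_nonneg (lpNorm_nonneg _) _) hPp_le (by positivity)
      _ = 1 := Real.one_rpow _
  exact ⟨⟨n, n', u, huX, hu0, hu1, h2n, h6a, h6b, hn'2⟩, rfl, huflat, hγ⟩

/-- cross-stage step -/
theorem cross_step_exists (hp : 1 < p)
    (hXinf : ¬ FiniteDimensional ℝ X) (hδ0 : 0 < δ) (hδ1 : δ < 1)
    (i : ℕ) (s : MCStage p X δ i) :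
    ∃ t : MCStage p X δ (i+1), t.n0 = s.n1 ∧
      (∀ j, |(⇑t.u : ℕ → ℝ) j| ≤ min (bS s) (1/(((s.n1 : ℝ) - (s.n0 : ℝ)) ^ (1/p)))) ∧
      1/(((t.n1 : ℝ) - (s.n1 : ℝ)) ^ (1/p)) ≤ bS s := by
  have hp0 : (0:ℝ) < p := by linarith
  have hb := stage_b_pos hp hδ1 s
  have hn01 : (0:ℝ) < (s.n1 : ℝ) - (s.n0 : ℝ) := by
    have := stage_n0_lt_n1 s
    have : (s.n0 : ℝ) < (s.n1 : ℝ) := by exact_mod_cast this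
    linarith
  have hq : (0:ℝ) < 1/(((s.n1 : ℝ) - (s.n0 : ℝ)) ^ (1/p)) := by positivity
  have hβ : (0:ℝ) < min (bS s) (1/(((s.n1 : ℝ) - (s.n0 : ℝ)) ^ (1/p))) := lt_min hb hq
  obtain ⟨t, htn0, htflat, htγ⟩ := step_exists hp hXinf hδ0 hδ1 (i+1) s.n1 hβ
    (s.n1 + Nat.ceil ((bS s)⁻¹ ^ p))
  refine ⟨t, htn0, htflat, ?_⟩
  have hceil : ((bS s)⁻¹ ^ p : ℝ) ≤ ((t.n1 : ℝ) - (s.n1 : ℝ)) := by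
    have h1 : Nat.ceil ((bS s)⁻¹ ^ p) ≤ t.n1 - s.n1 := by omega
    calc ((bS s)⁻¹ ^ p : ℝ) ≤ (Nat.ceil ((bS s)⁻¹ ^ p) : ℝ) := Nat.le_ceil _
      _ ≤ ((t.n1 - s.n1 : ℕ) : ℝ) := by exact_mod_cast h1
      _ = (t.n1 : ℝ) - (s.n1 : ℝ) := by
          have : s.n1 ≤ t.n1 := by omega
          push_cast [Nat.cast_sub this]
          ring
  have hinv : (bS s)⁻¹ ≤ ((t.n1 : ℝ) - (s.n1 : ℝ)) ^ (1/p) := by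
    calc (bS s)⁻¹ = ((bS s)⁻¹ ^ p) ^ (1/p) := (rpow_rpow_inv hp (by positivity)).symm
      _ ≤ ((t.n1 : ℝ) - (s.n1 : ℝ)) ^ (1/p) :=
          Real.rpow_le_rpow (by positivity) hceil (by positivity)
  calc 1/(((t.n1 : ℝ) - (s.n1 : ℝ)) ^ (1/p)) ≤ 1/((bS s)⁻¹) := by
        apply one_div_le_one_div_of_le (by positivity) hinv
    _ = bS s := by rw [one_div, inv_inv]
end MC

/-- The inductive construction of the main theorem: in an infinite-dimensional
closed subspace `X ⊆ ℓ_p` there are indices `0 = n₀ < n₁ < ⋯` with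
`2 n_{k-1} < n_k` and norm-one `u_k ∈ X` vanishing on the first `n_{k-1}`
coordinates such that, with `v_k = P_{n_k} u_k`, `w_k = R_{n_k} u_k`,
`I_k = {n_{k-1}+1, …, n_k}` (0-indexed: `[n_{k-1}, n_k)`) and
`b_k = min {|v_k(j)| : j ∈ I_k, v_k(j) ≠ 0}`, conditions (1)–(7) hold.
Below `i + 1` plays the role of `k ≥ 1`. -/
theorem exists_main_inductive_construction (p : ℝ) (hp : 1 < p)
    [Fact (1 ≤ ENNReal.ofReal p)]
    (X : Submodule ℝ (lp (fun _ : ℕ => ℝ) (ENNReal.ofReal p)))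
    (hXclosed : IsClosed (X : Set (lp (fun _ : ℕ => ℝ) (ENNReal.ofReal p))))
    (hXinf : ¬ FiniteDimensional ℝ X)
    (δ : ℝ) (hδ0 : 0 < δ) (hδ1 : δ < 1) :
    ∃ (nseq : ℕ → ℕ) (u : ℕ → lp (fun _ : ℕ => ℝ) (ENNReal.ofReal p)),
      nseq 0 = 0 ∧
      ∀ i : ℕ,
        u (i + 1) ∈ X ∧
        (∀ j < nseq i, (⇑(u (i + 1)) : ℕ → ℝ) j = 0) ∧
        -- (1)
        ‖u (i + 1)‖ = 1 ∧
        -- (2)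
        2 * nseq i < nseq (i + 1) ∧
        -- (3)
        Function.support (Pproj (nseq (i + 1)) (⇑(u (i + 1)))) ⊆
          Set.Ico (nseq i) (nseq (i + 1)) ∧
        -- (4)
        (∀ j : ℕ, |Pproj (nseq (i + 2)) (⇑(u (i + 2))) j| ≤
          min (minNonzeroOn (Pproj (nseq (i + 1)) (⇑(u (i + 1))))
                (Set.Ico (nseq i) (nseq (i + 1))))
              (1 / ((nseq (i + 1) : ℝ) - (nseq i : ℝ)) ^ (1 / p))) ∧
        -- (5)
        1 / ((nseq (i + 2) : ℝ) - (nseq (i + 1) : ℝ)) ^ (1 / p) ≤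
          minNonzeroOn (Pproj (nseq (i + 1)) (⇑(u (i + 1))))
            (Set.Ico (nseq i) (nseq (i + 1))) ∧
        -- (6)
        (1 - δ ≤ lpNorm p (Pproj (nseq (i + 1)) (⇑(u (i + 1)))) ∧
          lpNorm p (Pproj (nseq (i + 1)) (⇑(u (i + 1)))) ≤ 1) ∧
        -- (7)
        lpNorm p (Rproj (nseq (i + 1)) (⇑(u (i + 1)))) ≤ δ / 2 ^ (i + 1) := by
  classical
  obtain ⟨s0, hs0n, -, -⟩ :=
    MC.step_exists (X := X) (δ := δ) hp hXinf hδ0 hδ1 0 0 (one_pos) 0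
  choose F hFn0 hFflat hF5 using
    MC.cross_step_exists (X := X) (δ := δ) hp hXinf hδ0 hδ1
  set s : ∀ i : ℕ, MCStage p X δ i :=
    fun i => Nat.rec (motive := fun i => MCStage p X δ i) s0 (fun i prev => F i prev) i
    with hsdef
  refine ⟨fun i => (s i).n0,
    fun k => Nat.rec (motive := fun _ => lp (fun _ : ℕ => ℝ) (ENNReal.ofReal p)) 0
      (fun i _ => (s i).u) k, hs0n, ?_⟩
  intro i
  have hA : (s (i+1)).n0 = (s i).n1 := hFn0 i (s i)
  have hB : (s (i+2)).n0 = (s (i+1)).n1 := hFn0 (i+1) (s (i+1))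
  have hbpos := MC.stage_b_pos hp hδ1 (s i)
  have hn01 : (0:ℝ) < ((s i).n1 : ℝ) - ((s i).n0 : ℝ) := by
    have := MC.stage_n0_lt_n1 (s i)
    have h2 : ((s i).n0 : ℝ) < ((s i).n1 : ℝ) := by exact_mod_cast this
    linarith
  refine ⟨(s i).hmem, (s i).hz, (s i).hnorm, ?_, ?_, ?_, ?_, ⟨?_, ?_⟩, ?_⟩
  · show 2 * (s i).n0 < (s (i+1)).n0
    rw [hA]; exact (s i).hlt
  · show Function.support (Pproj ((s (i+1)).n0) ⇑((s i).u)) ⊆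
      Set.Ico ((s i).n0) ((s (i+1)).n0)
    rw [hA]
    intro j hj
    rw [Function.mem_support, Pproj] at hj
    by_cases h : j < (s i).n1
    · simp only [if_pos h] at hj
      exact Set.mem_Ico.mpr ⟨Nat.le_of_not_lt (fun hc => hj ((s i).hz j hc)), h⟩
    · simp only [if_neg h] at hj
      exact absurd rfl hj
  · show ∀ j : ℕ, |Pproj ((s (i+2)).n0) (⇑((s (i+1)).u)) j| ≤
      min (minNonzeroOn (Pproj ((s (i+1)).n0) (⇑((s i).u)))
            (Set.Ico ((s i).n0) ((s (i+1)).n0)))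
          (1 / (((s (i+1)).n0 : ℝ) - ((s i).n0 : ℝ)) ^ (1 / p))
    rw [hA, hB]
    intro j
    have hflat := hFflat i (s i) j
    rcases Nat.lt_or_ge j ((s (i+1)).n1) with h | h
    · rw [Pproj]
      simp only [if_pos h]
      exact hflat
    · rw [Pproj]
      simp only [if_neg (Nat.not_lt.mpr h), abs_zero]
      exact le_min hbpos.le (by positivity)
  · show 1 / (((s (i+2)).n0 : ℝ) - ((s (i+1)).n0 : ℝ)) ^ (1 / p) ≤
      minNonzeroOn (Pproj ((s (i+1)).n0) (⇑((s i).u)))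
        (Set.Ico ((s i).n0) ((s (i+1)).n0))
    rw [hA, hB]
    exact hF5 i (s i)
  · show 1 - δ ≤ lpNorm p (Pproj ((s (i+1)).n0) ⇑((s i).u))
    rw [hA]; exact (s i).h6a
  · show lpNorm p (Pproj ((s (i+1)).n0) ⇑((s i).u)) ≤ 1
    rw [hA]; exact (s i).h6b
  · show lpNorm p (Rproj ((s (i+1)).n0) ⇑((s i).u)) ≤ δ / 2 ^ (i+1)
    rw [hA]; exact (s i).h7
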